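/- There exist a unit vector Ψ ∈ ℂ² ⊗ ℂ² ⊗ ℂ² and, for each x ∈ {0,1}, projective POVMs {A_a^x}_{a∈{0,1,⊥}} on the middle ℂ² factor and {B_a^x}_{a∈{0,1,⊥}} on the last ℂ² factor, such that with V_a^x := H^x|a⟩⟨a|H^x (H the Hadamard matrix) one has: (i) P_Correct := (1/2)·Σ_{x∈{0,1}} Σ_{a∈{0,1}} ⟨V_a^x·A_a^x·B_a^x⟩_Ψ = 1/2; (ii) P_Wrong := (1/2)·Σ_{x∈{0,1}} Σ_{a∈{0,1}} ⟨V_a^x·A_{1−a}^x·B_{1−a}^x⟩_Ψ = 0; (iii) P_NoPhoton := (1/2)·Σ_{x∈{0,1}} ⟨I·A_⊥^x·B_⊥^x⟩_Ψ = 1/2; (iv) P_Abort := (1/2)·Σ_{x∈{0,1}} Σ_{a≠b∈{0,1,⊥}} ⟨I·A_a^x·B_b^x⟩_Ψ = 0. (One valid choice is Ψ = (1/√2)(|0⟩|0⟩|0⟩ + |+⟩|1⟩|1⟩), A_0^x = B_0^x = |x⟩⟨x|, A_1^x = B_1^x = 0, A_⊥^x = B_⊥^x = |1−x⟩⟨1−x|.)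 This exhibits the uniform strategy breaking the lossy BB84 quantum position verification protocol at transmission rate η = 1/2 with zero error. -/

import Mathlib

open Matrix Kronecker BigOperators

noncomputable section

/-- ⟨Ψ, (V ⊗ A ⊗ B) Ψ⟩ as a real number. -/
def exval (χ : Fin 2 × Fin 2 × Fin 2 → ℂ)
    (V A B : Matrix (Fin 2) (Fin 2) ℂ) : ℝ :=
  (star χ ⬝ᵥ (V ⊗ₖ (A ⊗ₖ B)).mulVec χ).re

/-- A projective POVM with outcomes {0, 1, ⊥} (⊥ encoded as the index 2): three
orthogonal projections (possibly zero) summing to the identity. -/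
def IsProjPOVM (A : Fin 3 → Matrix (Fin 2) (Fin 2) ℂ) : Prop :=
  (∀ a, (A a)ᴴ = A a ∧ A a * A a = A a) ∧ A 0 + A 1 + A 2 = 1

/-- The Hadamard matrix. -/
def Hmat : Matrix (Fin 2) (Fin 2) ℂ :=
  (((Real.sqrt 2)⁻¹ : ℝ) : ℂ) • !![1, 1; 1, -1]

/-- The BB84 verifier measurement operators V_a^x = H^x |a⟩⟨a| H^x. -/
def Vbb84 (x a : Fin 2) : Matrix (Fin 2) (Fin 2) ℂ :=
  Hmat ^ (x : ℕ) * Matrix.single a a 1 * Hmat ^ (x : ℕ)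

def E0 : Matrix (Fin 2) (Fin 2) ℂ := !![1,0;0,0]
def E1 : Matrix (Fin 2) (Fin 2) ℂ := !![0,0;0,1]

lemma V00 : Vbb84 0 0 = E0 := by
  simp [Vbb84, E0]
  ext i j
  fin_cases i <;> fin_cases j <;> simp [Matrix.single]

lemma V01 : Vbb84 0 1 = E1 := by
  simp [Vbb84, E1]
  ext i j
  fin_cases i <;> fin_cases j <;> simp [Matrix.single]

lemma V10 : Vbb84 1 0 = (1/2 : ℂ) • !![1,1;1,1] := by
  simp only [Vbb84, Hmat, pow_one]
  ext i j
  fin_cases i <;> fin_cases j <;>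
    simp [Matrix.mul_apply, Matrix.single, Fin.sum_univ_two,
      Matrix.vecHead, Matrix.vecTail] <;>
    rw [← mul_inv, show ((Real.sqrt 2 : ℝ) : ℂ) * ((Real.sqrt 2 : ℝ) : ℂ) = 2 by
      norm_cast; exact Real.mul_self_sqrt (by norm_num)]

lemma V11 : Vbb84 1 1 = (1/2 : ℂ) • !![1,-1;-1,1] := by
  simp only [Vbb84, Hmat, pow_one]
  ext i j
  fin_cases i <;> fin_cases j <;>
    simp [Matrix.mul_apply, Matrix.single, Fin.sum_univ_two,
      Matrix.vecHead, Matrix.vecTail] <;>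
    rw [← mul_inv, show ((Real.sqrt 2 : ℝ) : ℂ) * ((Real.sqrt 2 : ℝ) : ℂ) = 2 by
      norm_cast; exact Real.mul_self_sqrt (by norm_num)]

def Ψ0 : Fin 2 × Fin 2 × Fin 2 → ℂ := fun p =>
  if p = (0,0,0) then (((Real.sqrt 2)⁻¹ : ℝ) : ℂ)
  else if p = (0,1,1) then 1/2
  else if p = (1,1,1) then 1/2 else 0

lemma povm0 : IsProjPOVM ![E0, 0, E1] := by
  constructor
  · intro a
    fin_cases a <;>
      constructor <;>
      · ext i j
        fin_cases i <;> fin_cases j <;>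
          simp [E0, E1, Matrix.mul_apply, Fin.sum_univ_two, Matrix.conjTranspose_apply]
  · ext i j
    fin_cases i <;> fin_cases j <;> simp [E0, E1, Matrix.one_apply]

lemma povm1 : IsProjPOVM ![E1, 0, E0] := by
  constructor
  · intro a
    fin_cases a <;>
      constructor <;>
      · ext i j
        fin_cases i <;> fin_cases j <;>
          simp [E0, E1, Matrix.mul_apply, Fin.sum_univ_two, Matrix.conjTranspose_apply]
  · ext i j
    fin_cases i <;> fin_cases j <;> simp [E0, E1, Matrix.one_apply]

lemma ex_zeroA (V B : Matrix (Fin 2) (Fin 2) ℂ) : exval Ψ0 V 0 B = 0 := by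
  simp [exval]

lemma ex_zeroB (V A : Matrix (Fin 2) (Fin 2) ℂ) : exval Ψ0 V A 0 = 0 := by
  simp [exval]

lemma ex1 : exval Ψ0 E0 E0 E0 = 1/2 := by
  simp [exval, dotProduct, Matrix.mulVec, Fintype.sum_prod_type, Fin.sum_univ_two,
    kroneckerMap_apply, Ψ0, E0, E1, Complex.ext_iff, Prod.ext_iff]
  norm_num
  nlinarith [Real.mul_self_sqrt (show (0:ℝ) ≤ 2 by norm_num)]

lemma ex2 : exval Ψ0 !![2⁻¹, 2⁻¹; 2⁻¹, 2⁻¹] E1 E1 = 2⁻¹ := by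
  simp [exval, dotProduct, Matrix.mulVec, Fintype.sum_prod_type, Fin.sum_univ_two,
    kroneckerMap_apply, Ψ0, E0, E1, Complex.ext_iff, Prod.ext_iff]
  norm_num

lemma ex3 : exval Ψ0 E1 E0 E0 = 0 := by
  simp [exval, dotProduct, Matrix.mulVec, Fintype.sum_prod_type, Fin.sum_univ_two,
    kroneckerMap_apply, Ψ0, E0, E1, Complex.ext_iff, Prod.ext_iff]

lemma ex4 : exval Ψ0 !![2⁻¹, -2⁻¹; -2⁻¹, 2⁻¹] E1 E1 = 0 := by
  simp [exval, dotProduct, Matrix.mulVec, Fintype.sum_prod_type, Fin.sum_univ_two,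
    kroneckerMap_apply, Ψ0, E0, E1, Complex.ext_iff, Prod.ext_iff]

lemma ex5 : exval Ψ0 1 E1 E1 = 1/2 := by
  simp [exval, dotProduct, Matrix.mulVec, Fintype.sum_prod_type, Fin.sum_univ_two,
    kroneckerMap_apply, Ψ0, E0, E1, Matrix.one_apply, Complex.ext_iff, Prod.ext_iff]
  norm_num

lemma ex6 : exval Ψ0 1 E0 E0 = 1/2 := by
  simp [exval, dotProduct, Matrix.mulVec, Fintype.sum_prod_type, Fin.sum_univ_two,
    kroneckerMap_apply, Ψ0, E0, E1, Matrix.one_apply, Complex.ext_iff, Prod.ext_iff]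
  norm_num
  nlinarith [Real.mul_self_sqrt (show (0:ℝ) ≤ 2 by norm_num)]

lemma ex7 : exval Ψ0 1 E0 E1 = 0 := by
  simp [exval, dotProduct, Matrix.mulVec, Fintype.sum_prod_type, Fin.sum_univ_two,
    kroneckerMap_apply, Ψ0, E0, E1, Matrix.one_apply, Complex.ext_iff, Prod.ext_iff]

lemma ex8 : exval Ψ0 1 E1 E0 = 0 := by
  simp [exval, dotProduct, Matrix.mulVec, Fintype.sum_prod_type, Fin.sum_univ_two,
    kroneckerMap_apply, Ψ0, E0, E1, Matrix.one_apply, Complex.ext_iff, Prod.ext_iff]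

/-- The uniform strategy breaking lossy BB84-QPV at transmission rate η = 1/2 with
zero error: there is a state and projective POVMs with
P_Correct = 1/2, P_Wrong = 0, P_NoPhoton = 1/2 and P_Abort = 0. -/
theorem uniform_strategy_exists :
    ∃ Ψ : Fin 2 × Fin 2 × Fin 2 → ℂ, (∑ i, ‖Ψ i‖ ^ 2 = 1) ∧
      ∃ A B : Fin 2 → Fin 3 → Matrix (Fin 2) (Fin 2) ℂ,
        (∀ x, IsProjPOVM (A x)) ∧ (∀ x, IsProjPOVM (B x)) ∧
        ((1 / 2) * ∑ x : Fin 2, ∑ a : Fin 2,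
            exval Ψ (Vbb84 x a) (A x a.castSucc) (B x a.castSucc) = 1 / 2) ∧
        ((1 / 2) * ∑ x : Fin 2, ∑ a : Fin 2,
            exval Ψ (Vbb84 x a) (A x (1 - a).castSucc) (B x (1 - a).castSucc) = 0) ∧
        ((1 / 2) * ∑ x : Fin 2, exval Ψ 1 (A x 2) (B x 2) = 1 / 2) ∧
        ((1 / 2) * ∑ x : Fin 2, ∑ a : Fin 3, ∑ b : Fin 3,
            (if a = b then 0 else exval Ψ 1 (A x a) (B x b)) = 0) := by

  refine ⟨Ψ0, ?_, ![![E0, 0, E1], ![E1, 0, E0]], ![![E0, 0, E1], ![E1, 0, E0]], ?_, ?_, ?_, ?_, ?_, ?_⟩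
  · simp [Fintype.sum_prod_type, Fin.sum_univ_two, Ψ0, Prod.ext_iff]
    nlinarith [Real.mul_self_sqrt (show (0:ℝ) ≤ 2 by norm_num)]
  · intro x; fin_cases x <;> simp [povm0, povm1]
  · intro x; fin_cases x <;> simp [povm0, povm1]
  · simp [Fin.sum_univ_two, V00, V01, V10, V11,
      show (0:Fin 2).castSucc = 0 from rfl, show (1:Fin 2).castSucc = 1 from rfl,
      ex1, ex2, ex_zeroA]
    norm_num
  · simp [Fin.sum_univ_two, V00, V01, V10, V11,
      show ((1:Fin 2) - 0) = 1 from rfl, show ((1:Fin 2) - 1) = 0 from rfl,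
      show (0:Fin 2).castSucc = 0 from rfl, show (1:Fin 2).castSucc = 1 from rfl,
      ex3, ex4, ex_zeroA]
  · simp [Fin.sum_univ_two, ex5, ex6]
    norm_num
  · simp [Fin.sum_univ_two, Fin.sum_univ_three, ex7, ex8, ex_zeroA, ex_zeroB]


end
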